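/- arXiv:1611.03699 — 3 statements merged into one kernel-verified Lean document; each statement's English description precedes it below -/
import Mathlib

section
/- Let N ≤ P and M ≤ N be positive integers, let C > 0 and t > 0 be real constants, and let A ∈ ℂ^{N×P} satisfy A·Aᴴ = C·I_N. Then a matrix Φ ∈ ℂ^{M×N} minimizes J(Φ) = ‖Aᴴ·Φᴴ·Φ·A − t·I_P‖_F² over all matrices in ℂ^{M×N} if and only if Φ·Φᴴ = (t/C)·I_M, i.e., if and only if the rows of Φ are mutually orthogonal and all have squared Euclidean norm t/C. -/
open Matrix

noncomputable def frobSq {m n : Type*} [Fintype m] [Fintype n] (X : Matrix m n ℂ) : ℝ :=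
  ∑ i, ∑ j, ‖X i j‖ ^ 2

lemma norm_sq_eq_star_mul_re (z : ℂ) : ‖z‖ ^ 2 = (star z * z).re := by
  rw [Complex.star_def, ← Complex.normSq_eq_conj_mul_self, Complex.ofReal_re,
    Complex.normSq_eq_norm_sq]

lemma frobSq_eq_trace' {m n : Type*} [Fintype m] [Fintype n] (X : Matrix m n ℂ) :
    (∑ i, ∑ j, ‖X i j‖ ^ 2) = (Matrix.trace (Xᴴ * X)).re := by
  rw [Matrix.trace]
  simp only [Matrix.diag, Matrix.mul_apply, Matrix.conjTranspose_apply, Complex.re_sum]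
  rw [Finset.sum_comm]
  congr 1; ext i; congr 1; ext j
  exact norm_sq_eq_star_mul_re _

lemma frobSq_eq_zero' {m n : Type*} [Fintype m] [Fintype n] (X : Matrix m n ℂ)
    (h : (∑ i, ∑ j, ‖X i j‖ ^ 2) = 0) : X = 0 := by
  ext i j
  have h1 := (Finset.sum_eq_zero_iff_of_nonneg
    (fun i _ => Finset.sum_nonneg (fun j _ => by positivity))).mp h i (Finset.mem_univ i)
  have h2 := (Finset.sum_eq_zero_iff_of_nonneg (fun j _ => by positivity)).mp h1 j
    (Finset.mem_univ j)
  simpa using h2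

section key
variable {N P M : ℕ} (C t : ℝ)
variable (A : Matrix (Fin N) (Fin P) ℂ)

-- trace of first moment
lemma trace1 (hA : A * Aᴴ = (C : ℂ) • 1) (Ψ : Matrix (Fin M) (Fin N) ℂ) :
    trace (Aᴴ * Ψᴴ * Ψ * A) = (C : ℂ) * trace (Ψ * Ψᴴ) := by
  calc trace (Aᴴ * Ψᴴ * Ψ * A) = trace ((Aᴴ * Ψᴴ) * (Ψ * A)) := by
        rw [Matrix.mul_assoc]
    _ = trace ((Ψ * A) * (Aᴴ * Ψᴴ)) := trace_mul_comm _ _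
    _ = trace (Ψ * (A * Aᴴ) * Ψᴴ) := by rw [Matrix.mul_assoc, Matrix.mul_assoc, Matrix.mul_assoc]
    _ = (C : ℂ) * trace (Ψ * Ψᴴ) := by
        rw [hA]; simp [Matrix.mul_smul, Matrix.smul_mul, Matrix.trace_smul, smul_eq_mul]

lemma trace2 (hA : A * Aᴴ = (C : ℂ) • 1) (Ψ : Matrix (Fin M) (Fin N) ℂ) :
    trace ((Aᴴ * Ψᴴ * Ψ * A) * (Aᴴ * Ψᴴ * Ψ * A)) =
      (C : ℂ)^2 * trace ((Ψ * Ψᴴ) * (Ψ * Ψᴴ)) := by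
  calc trace ((Aᴴ * Ψᴴ * Ψ * A) * (Aᴴ * Ψᴴ * Ψ * A))
      = trace ((Aᴴ * Ψᴴ) * ((Ψ * (A * Aᴴ) * Ψᴴ) * (Ψ * A))) := by
        simp only [Matrix.mul_assoc]
    _ = trace (((Ψ * (A * Aᴴ) * Ψᴴ) * (Ψ * A)) * (Aᴴ * Ψᴴ)) := trace_mul_comm _ _
    _ = trace (Ψ * (A * Aᴴ) * (Ψᴴ * Ψ) * (A * Aᴴ) * Ψᴴ) := by simp only [Matrix.mul_assoc]
    _ = (C : ℂ)^2 * trace (Ψ * (Ψᴴ * Ψ) * Ψᴴ) := by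
        rw [hA]
        simp only [Matrix.mul_smul, Matrix.smul_mul, Matrix.mul_one, trace_smul, smul_eq_mul,
          smul_smul]
        ring
    _ = (C : ℂ)^2 * trace ((Ψ * Ψᴴ) * (Ψ * Ψᴴ)) := by
        congr 2
        simp only [Matrix.mul_assoc]

lemma key_trace (hA : A * Aᴴ = (C : ℂ) • 1) (Ψ : Matrix (Fin M) (Fin N) ℂ) :
    trace ((Aᴴ * Ψᴴ * Ψ * A - (t : ℂ) • 1)ᴴ * (Aᴴ * Ψᴴ * Ψ * A - (t : ℂ) • 1)) =
    trace ((((C : ℂ) • (Ψ * Ψᴴ) - (t : ℂ) • 1))ᴴ * ((C : ℂ) • (Ψ * Ψᴴ) - (t : ℂ) • 1))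
      + (t : ℂ)^2 * ((P : ℂ) - (M : ℂ)) := by
  have hX : (Aᴴ * Ψᴴ * Ψ * A)ᴴ = Aᴴ * Ψᴴ * Ψ * A := by
    simp [conjTranspose_mul, Matrix.mul_assoc]
  have hQ : (Ψ * Ψᴴ)ᴴ = Ψ * Ψᴴ := by simp [conjTranspose_mul]
  have hct : star ((t : ℂ)) = (t : ℂ) := by simp
  have hcc : star ((C : ℂ)) = (C : ℂ) := by simp
  rw [conjTranspose_sub, conjTranspose_sub, conjTranspose_smul, conjTranspose_smul,
    conjTranspose_one, hX, conjTranspose_smul, hQ, hct, hcc]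
  simp only [Matrix.sub_mul, Matrix.mul_sub, Matrix.smul_mul, Matrix.mul_smul,
    Matrix.mul_one, Matrix.one_mul, trace_sub, trace_smul, trace_one, smul_smul, conjTranspose_one, Fintype.card_fin,
    smul_eq_mul]
  rw [trace1 C A hA, trace2 C A hA]
  ring

end key


set_option maxHeartbeats 1000000 in
/-- Corollary 1 of the paper: for the ideal target `T = t·I_P`, `Φ` minimizes
`‖Aᴴ Φᴴ Φ A − t·I‖_F²` iff `Φ·Φᴴ = (t/C)·I_M`, i.e. iff the rows of `Φ` are
mutually orthogonal and all have squared norm `t/C`. -/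
theorem stmt1 (N P M : ℕ) (hN : 0 < N) (hM : 0 < M) (hNP : N ≤ P) (hMN : M ≤ N)
    (C t : ℝ) (hC : 0 < C) (ht : 0 < t)
    (A : Matrix (Fin N) (Fin P) ℂ) (hA : A * Aᴴ = (C : ℂ) • 1)
    (Φ : Matrix (Fin M) (Fin N) ℂ) :
    (∀ Ψ : Matrix (Fin M) (Fin N) ℂ,
        frobSq (Aᴴ * Φᴴ * Φ * A - (t : ℂ) • 1) ≤ frobSq (Aᴴ * Ψᴴ * Ψ * A - (t : ℂ) • 1)) ↔
    Φ * Φᴴ = ((t / C : ℝ) : ℂ) • 1 := by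
  have hCne : (C : ℂ) ≠ 0 := by exact_mod_cast hC.ne'
  -- key real identity
  have hJ : ∀ Ψ : Matrix (Fin M) (Fin N) ℂ,
      frobSq (Aᴴ * Ψᴴ * Ψ * A - (t : ℂ) • 1) =
        frobSq ((C : ℂ) • (Ψ * Ψᴴ) - (t : ℂ) • 1) + t ^ 2 * ((P : ℝ) - (M : ℝ)) := by
    intro Ψ
    have h1 : frobSq (Aᴴ * Ψᴴ * Ψ * A - (t : ℂ) • 1) =
        (trace ((Aᴴ * Ψᴴ * Ψ * A - (t : ℂ) • 1)ᴴ * (Aᴴ * Ψᴴ * Ψ * A - (t : ℂ) • 1))).re := by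
      exact frobSq_eq_trace' (Aᴴ * Ψᴴ * Ψ * A - (t : ℂ) • 1)
    have h2 : frobSq ((C : ℂ) • (Ψ * Ψᴴ) - (t : ℂ) • 1) =
        (trace (((C : ℂ) • (Ψ * Ψᴴ) - (t : ℂ) • 1)ᴴ *
          ((C : ℂ) • (Ψ * Ψᴴ) - (t : ℂ) • 1))).re := by
      exact frobSq_eq_trace' ((C : ℂ) • (Ψ * Ψᴴ) - (t : ℂ) • 1)
    rw [h1, h2, key_trace C t A hA Ψ]
    have h3 : (t : ℂ) ^ 2 * ((P : ℂ) - (M : ℂ)) = ((t ^ 2 * ((P : ℝ) - (M : ℝ)) : ℝ) : ℂ) := by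
      push_cast; ring
    rw [Complex.add_re, h3, Complex.ofReal_re]
  have hfnonneg : ∀ {m n : Type} [Fintype m] [Fintype n] (X : Matrix m n ℂ), 0 ≤ frobSq X := by
    intro m n _ _ X
    simp only [frobSq]
    positivity
  -- the scalar fact C * (t/C) = t
  have hscal : (C : ℂ) • (((t / C : ℝ) : ℂ) • (1 : Matrix (Fin M) (Fin M) ℂ)) = (t : ℂ) • 1 := by
    rw [smul_smul]
    congr 1
    push_cast
    field_simp
  -- existence of an optimal matrix
  set r : ℝ := Real.sqrt (t / C) with hr
  set Ψ₀ : Matrix (Fin M) (Fin N) ℂ :=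
    Matrix.of (fun i j => if j = Fin.castLE hMN i then (r : ℂ) else 0) with hΨ₀def
  have hdiv : (0:ℝ) ≤ t / C := le_of_lt (div_pos ht hC)
  have hΨ₀ : Ψ₀ * Ψ₀ᴴ = ((t / C : ℝ) : ℂ) • 1 := by
    ext i k
    rw [Matrix.mul_apply]
    rw [Finset.sum_eq_single (Fin.castLE hMN i)
      (fun j _ hj => by simp [hΨ₀def, conjTranspose_apply, hj])
      (fun h => absurd (Finset.mem_univ _) h)]
    by_cases h : i = k
    · subst h
      simp [hΨ₀def, conjTranspose_apply, Matrix.one_apply, Complex.star_def,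
        Complex.conj_ofReal, ← Complex.ofReal_mul, hr, Real.mul_self_sqrt hdiv]
    · have hck : ¬ (Fin.castLE hMN i = Fin.castLE hMN k) := by
        simpa [Fin.castLE_inj] using h
      simp [hΨ₀def, conjTranspose_apply, Matrix.one_apply, h, hck]
  constructor
  · intro hmin
    have h0 := hmin Ψ₀
    rw [hJ Φ, hJ Ψ₀, hΨ₀, hscal, sub_self] at h0
    have hz : frobSq ((0 : Matrix (Fin M) (Fin M) ℂ)) = 0 := by simp [frobSq]
    rw [hz] at h0
    have hle : frobSq ((C : ℂ) • (Φ * Φᴴ) - (t : ℂ) • 1) ≤ 0 := by linarith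
    have heq : frobSq ((C : ℂ) • (Φ * Φᴴ) - (t : ℂ) • 1) = 0 :=
      le_antisymm hle (hfnonneg _)
    have hz2 : (C : ℂ) • (Φ * Φᴴ) - (t : ℂ) • 1 = 0 := by
      apply frobSq_eq_zero'
      exact heq
    have hz3 : (C : ℂ) • (Φ * Φᴴ) = (t : ℂ) • 1 := by
      rwa [sub_eq_zero] at hz2
    calc Φ * Φᴴ = ((C : ℂ)⁻¹) • ((C : ℂ) • (Φ * Φᴴ)) := by
          rw [smul_smul, inv_mul_cancel₀ hCne, one_smul]
      _ = ((C : ℂ)⁻¹) • ((t : ℂ) • 1) := by rw [hz3]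
      _ = ((t / C : ℝ) : ℂ) • 1 := by
          rw [smul_smul]
          congr 1
          push_cast
          field_simp
  · intro hΦ Ψ
    rw [hJ Φ, hJ Ψ, hΦ, hscal, sub_self]
    have hz : frobSq ((0 : Matrix (Fin M) (Fin M) ℂ)) = 0 := by simp [frobSq]
    rw [hz]
    have := hfnonneg ((C : ℂ) • (Ψ * Ψᴴ) - (t : ℂ) • 1)
    linarith
end

section
/- Let N ≤ P be positive integers, let C > 0 be a real constant, and let A ∈ ℂ^{N×P} satisfy A·Aᴴ = C·I_N. Then for every X ∈ ℂ^{N×N} and every T ∈ ℂ^{P×P}, with S = A·T·Aᴴ, the identity ‖Aᴴ·X·A − T‖_F² = C²·‖X − C^{-2}·S‖_F² + ‖T‖_F² − C^{-2}·‖S‖_F² holds. -/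
open Matrix

lemma frobSq_eq {m n : Type*} [Fintype m] [Fintype n] [DecidableEq n] (X : Matrix m n ℂ) :
    frobSq X = (trace (Xᴴ * X)).re := by
  simp only [frobSq, trace, diag, mul_apply, conjTranspose_apply]
  rw [Complex.re_sum, Finset.sum_comm]
  congr 1; ext i
  rw [Complex.re_sum]
  congr 1; ext j
  rw [show (star (X j i)) = (starRingEnd ℂ) (X j i) from rfl,
    ← Complex.normSq_eq_conj_mul_self]
  rw [Complex.normSq_eq_norm_sq, Complex.ofReal_re]

/-- Key identity in the proof of Theorem 1 (Appendix A):
`‖Aᴴ X A − T‖_F² = C²·‖X − C⁻²·S‖_F² + ‖T‖_F² − C⁻²·‖S‖_F²` where `S = A T Aᴴ`. -/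
theorem stmt2 (N P : ℕ) (hN : 0 < N) (hNP : N ≤ P)
    (C : ℝ) (hC : 0 < C)
    (A : Matrix (Fin N) (Fin P) ℂ) (hA : A * Aᴴ = (C : ℂ) • 1)
    (X : Matrix (Fin N) (Fin N) ℂ) (T : Matrix (Fin P) (Fin P) ℂ)
    (S : Matrix (Fin N) (Fin N) ℂ) (hS : S = A * T * Aᴴ) :
    frobSq (Aᴴ * X * A - T) =
      C ^ 2 * frobSq (X - ((C : ℂ) ^ 2)⁻¹ • S) + frobSq T - (C ^ 2)⁻¹ * frobSq S := by
  have hc : (C : ℂ) ≠ 0 := by exact_mod_cast hC.ne'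
  set c : ℂ := (C : ℂ) with hcdef
  set d : ℂ := (c ^ 2)⁻¹ with hddef
  have hdconj : star d = d := by
    simp [hddef, hcdef, ← Complex.ofReal_pow, Complex.conj_ofReal]
  set t1 := trace (Xᴴ * X) with ht1
  set tXS := trace (Xᴴ * S) with htXS
  set tSX := trace (Sᴴ * X) with htSX
  set tS := trace (Sᴴ * S) with htS
  set tT := trace (Tᴴ * T) with htT
  have hSH : Sᴴ = A * (Tᴴ * Aᴴ) := by
    rw [hS]; simp only [conjTranspose_mul, conjTranspose_conjTranspose, Matrix.mul_assoc]
  have key1 : trace ((Aᴴ * X * A - T)ᴴ * (Aᴴ * X * A - T))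
      = c ^ 2 * t1 - tXS - tSX + tT := by
    have e : (Aᴴ * X * A - T)ᴴ * (Aᴴ * X * A - T)
        = Aᴴ * Xᴴ * A * (Aᴴ * X * A) - Aᴴ * Xᴴ * A * T - Tᴴ * (Aᴴ * X * A) + Tᴴ * T := by
      simp only [conjTranspose_sub, conjTranspose_mul, conjTranspose_conjTranspose,
        Matrix.sub_mul, Matrix.mul_sub, Matrix.mul_assoc]
      abel
    rw [e, trace_add, trace_sub, trace_sub]
    have h1 : trace (Aᴴ * Xᴴ * A * (Aᴴ * X * A)) = c ^ 2 * t1 := by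
      have e1 : Aᴴ * Xᴴ * A * (Aᴴ * X * A) = (Aᴴ * (Xᴴ * (A * (Aᴴ * X)))) * A := by
        simp only [Matrix.mul_assoc]
      rw [e1, trace_mul_comm]
      have e2 : A * (Aᴴ * (Xᴴ * (A * (Aᴴ * X)))) = (A * Aᴴ) * (Xᴴ * ((A * Aᴴ) * X)) := by
        simp only [Matrix.mul_assoc]
      rw [e2, hA]
      simp only [Matrix.smul_mul, Matrix.one_mul, Matrix.mul_smul, trace_smul, smul_eq_mul,
        ht1]
      ring
    have h2 : trace (Aᴴ * Xᴴ * A * T) = tXS := by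
      have e1 : Aᴴ * Xᴴ * A * T = Aᴴ * (Xᴴ * (A * T)) := by simp only [Matrix.mul_assoc]
      rw [e1, trace_mul_comm, htXS, hS]
      simp only [Matrix.mul_assoc]
    have h3 : trace (Tᴴ * (Aᴴ * X * A)) = tSX := by
      have e1 : Tᴴ * (Aᴴ * X * A) = (Tᴴ * (Aᴴ * X)) * A := by simp only [Matrix.mul_assoc]
      rw [e1, trace_mul_comm, htSX, hSH]
      simp only [Matrix.mul_assoc]
    rw [h1, h2, h3]
  have key2 : trace ((X - d • S)ᴴ * (X - d • S))
      = t1 - d * tXS - d * tSX + (d * d) * tS := by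
    have e : (X - d • S)ᴴ * (X - d • S)
        = Xᴴ * X - d • (Xᴴ * S) - d • (Sᴴ * X) + (d * d) • (Sᴴ * S) := by
      rw [conjTranspose_sub, conjTranspose_smul, hdconj, Matrix.sub_mul, Matrix.mul_sub,
        Matrix.mul_sub, Matrix.smul_mul, Matrix.mul_smul, Matrix.smul_mul, Matrix.mul_smul,
        smul_smul]
      abel
    rw [e, trace_add, trace_sub, trace_sub, trace_smul, trace_smul, trace_smul,
      smul_eq_mul, smul_eq_mul, smul_eq_mul]
  have main : trace ((Aᴴ * X * A - T)ᴴ * (Aᴴ * X * A - T))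
      = c ^ 2 * trace ((X - d • S)ᴴ * (X - d • S)) + tT - d * tS := by
    have hc2ne : c ^ 2 ≠ 0 := pow_ne_zero 2 hc
    have h1 : c ^ 2 * d = 1 := mul_inv_cancel₀ hc2ne
    rw [key1, key2]
    linear_combination (tXS + tSX - d * tS) * h1
  rw [frobSq_eq, frobSq_eq, frobSq_eq, frobSq_eq, main]
  have hc2 : c ^ 2 = ((C ^ 2 : ℝ) : ℂ) := by push_cast [hcdef]; ring
  have hd2 : d = (((C ^ 2)⁻¹ : ℝ) : ℂ) := by
    rw [hddef, hc2]; push_cast; ring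
  rw [Complex.sub_re, Complex.add_re, hc2, hd2, Complex.re_ofReal_mul, Complex.re_ofReal_mul]
end

section
/- Let N, M be positive integers, η > 0 and P_s > 0 real constants, and for σ₁ ≥ 0, σ₂ ≥ 0 with (σ₁,σ₂) ≠ (0,0) define ρ_c(σ₁,σ₂) = η²·N·P_s / (η²·N·σ₁² + M·σ₂²) and ρ_s(σ₁,σ₂) = P_s / (σ₁² + σ₂²). Then: (i) ρ_c/ρ_s = η²·N·(σ₁² + σ₂²) / (η²·N·σ₁² + M·σ₂²); (ii) for fixed σ₁ > 0, the ratio ρ_c/ρ_s tends to 1 as σ₂ → 0⁺; and (iii) for fixed σ₂ > 0, the ratio ρ_c/ρ_s tends to η²·N/M as σ₁ → 0⁺. -/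
open Filter

/-- SNR comparison of compressive and sparse arrays (Section 'Estimation
accuracy'): the ratio `ρ_c/ρ_s`, its limit 1 as the measurement noise `σ₂`
vanishes, and its limit `η²·N/M` as the signal noise `σ₁` vanishes. -/
theorem stmt10 (N M : ℕ) (hN : 0 < N) (hM : 0 < M)
    (η Ps : ℝ) (hη : 0 < η) (hPs : 0 < Ps)
    (ρc ρs : ℝ → ℝ → ℝ)
    (hρc : ∀ σ₁ σ₂ : ℝ, ρc σ₁ σ₂ = η ^ 2 * N * Ps / (η ^ 2 * N * σ₁ ^ 2 + M * σ₂ ^ 2))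
    (hρs : ∀ σ₁ σ₂ : ℝ, ρs σ₁ σ₂ = Ps / (σ₁ ^ 2 + σ₂ ^ 2)) :
    (∀ σ₁ σ₂ : ℝ, 0 ≤ σ₁ → 0 ≤ σ₂ → (σ₁, σ₂) ≠ (0, 0) →
        ρc σ₁ σ₂ / ρs σ₁ σ₂ =
          η ^ 2 * N * (σ₁ ^ 2 + σ₂ ^ 2) / (η ^ 2 * N * σ₁ ^ 2 + M * σ₂ ^ 2)) ∧
    (∀ σ₁ : ℝ, 0 < σ₁ →
        Tendsto (fun σ₂ : ℝ => ρc σ₁ σ₂ / ρs σ₁ σ₂) (nhdsWithin 0 (Set.Ioi 0)) (nhds 1)) ∧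
    (∀ σ₂ : ℝ, 0 < σ₂ →
        Tendsto (fun σ₁ : ℝ => ρc σ₁ σ₂ / ρs σ₁ σ₂) (nhdsWithin 0 (Set.Ioi 0))
          (nhds (η ^ 2 * N / M))) := by
  have hA : (0:ℝ) < η ^ 2 * N := by positivity
  have hMpos : (0:ℝ) < (M:ℝ) := by exact_mod_cast hM
  have key : ∀ σ₁ σ₂ : ℝ, 0 < σ₁ ^ 2 + σ₂ ^ 2 →
      ρc σ₁ σ₂ / ρs σ₁ σ₂ =
        η ^ 2 * N * (σ₁ ^ 2 + σ₂ ^ 2) / (η ^ 2 * N * σ₁ ^ 2 + M * σ₂ ^ 2) := by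
    intro σ₁ σ₂ hs
    have hden : (0:ℝ) < η ^ 2 * N * σ₁ ^ 2 + M * σ₂ ^ 2 := by
      rcases lt_or_ge 0 (σ₁ ^ 2) with h | h
      · have : (0:ℝ) ≤ (M:ℝ) * σ₂ ^ 2 := by positivity
        nlinarith
      · have h1 : σ₁ ^ 2 = 0 := le_antisymm h (sq_nonneg _)
        have h2 : (0:ℝ) < σ₂ ^ 2 := by nlinarith
        nlinarith
    rw [hρc, hρs]
    field_simp
  refine ⟨?_, ?_, ?_⟩
  · intro σ₁ σ₂ h1 h2 hne
    apply key
    rcases eq_or_lt_of_le (sq_nonneg σ₁) with hs1 | hs1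
    · have hσ₁ : σ₁ = 0 := by nlinarith [sq_nonneg σ₁]
      have hσ₂ : σ₂ ≠ 0 := by
        intro h; exact hne (by simp [hσ₁, h])
      have : 0 < σ₂ ^ 2 := by positivity
      nlinarith [sq_nonneg σ₁]
    · nlinarith [sq_nonneg σ₂]
  · intro σ₁ hσ₁
    have heq : (fun σ₂ : ℝ => ρc σ₁ σ₂ / ρs σ₁ σ₂) =ᶠ[nhdsWithin 0 (Set.Ioi 0)]
        (fun σ₂ : ℝ => η ^ 2 * N * (σ₁ ^ 2 + σ₂ ^ 2) / (η ^ 2 * N * σ₁ ^ 2 + M * σ₂ ^ 2)) := by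
      filter_upwards [self_mem_nhdsWithin] with σ₂ hσ₂
      exact key σ₁ σ₂ (by nlinarith [sq_nonneg σ₂])
    rw [Filter.tendsto_congr' heq]
    have hden : η ^ 2 * N * σ₁ ^ 2 + (M:ℝ) * (0:ℝ) ^ 2 ≠ 0 := by
      have h1 : σ₁ ≠ 0 := ne_of_gt hσ₁
      positivity
    have hc : Tendsto (fun σ₂ : ℝ => η ^ 2 * N * (σ₁ ^ 2 + σ₂ ^ 2) /
        (η ^ 2 * N * σ₁ ^ 2 + M * σ₂ ^ 2)) (nhds 0)
        (nhds (η ^ 2 * N * (σ₁ ^ 2 + (0:ℝ) ^ 2) / (η ^ 2 * N * σ₁ ^ 2 + M * (0:ℝ) ^ 2))) := by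
      apply Tendsto.div
      · exact (continuous_const.mul (continuous_const.add (continuous_pow 2))).tendsto 0
      · exact (continuous_const.add (continuous_const.mul (continuous_pow 2))).tendsto 0
      · exact hden
    have : η ^ 2 * N * (σ₁ ^ 2 + (0:ℝ) ^ 2) / (η ^ 2 * N * σ₁ ^ 2 + M * (0:ℝ) ^ 2) = 1 := by
      have h0 : η ^ 2 * N * σ₁ ^ 2 ≠ 0 := by positivity
      field_simp
      ring
    rw [this] at hc
    exact hc.mono_left nhdsWithin_le_nhds
  · intro σ₂ hσ₂
    have heq : (fun σ₁ : ℝ => ρc σ₁ σ₂ / ρs σ₁ σ₂) =ᶠ[nhdsWithin 0 (Set.Ioi 0)]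
        (fun σ₁ : ℝ => η ^ 2 * N * (σ₁ ^ 2 + σ₂ ^ 2) / (η ^ 2 * N * σ₁ ^ 2 + M * σ₂ ^ 2)) := by
      filter_upwards [self_mem_nhdsWithin] with σ₁ hσ₁
      exact key σ₁ σ₂ (by nlinarith [sq_nonneg σ₁])
    rw [Filter.tendsto_congr' heq]
    have hden : η ^ 2 * N * (0:ℝ) ^ 2 + (M:ℝ) * σ₂ ^ 2 ≠ 0 := by
      have h1 : σ₂ ≠ 0 := ne_of_gt hσ₂
      positivity
    have hc : Tendsto (fun σ₁ : ℝ => η ^ 2 * N * (σ₁ ^ 2 + σ₂ ^ 2) /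
        (η ^ 2 * N * σ₁ ^ 2 + M * σ₂ ^ 2)) (nhds 0)
        (nhds (η ^ 2 * N * ((0:ℝ) ^ 2 + σ₂ ^ 2) / (η ^ 2 * N * (0:ℝ) ^ 2 + M * σ₂ ^ 2))) := by
      apply Tendsto.div
      · exact (continuous_const.mul ((continuous_pow 2).add continuous_const)).tendsto 0
      · exact ((continuous_const.mul (continuous_pow 2)).add continuous_const).tendsto 0
      · exact hden
    have : η ^ 2 * N * ((0:ℝ) ^ 2 + σ₂ ^ 2) / (η ^ 2 * N * (0:ℝ) ^ 2 + M * σ₂ ^ 2) =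
        η ^ 2 * N / M := by
      have h0 : σ₂ ≠ 0 := ne_of_gt hσ₂
      field_simp
      ring
    rw [this] at hc
    exact hc.mono_left nhdsWithin_le_nhds
end
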